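/- (Theorem 2.2, decomposition of the joint law) The law μ of the random vector (τ_1, τ_2) on [0,∞)² decomposes as μ = μ_ac + μ_sing, where: (i) μ_ac is absolutely continuous with respect to two-dimensional Lebesgue measure and satisfies μ_ac((s,∞)×(t,∞)) = exp(−A^1_s − A^2_t − A^3_{max(s,t)}) − ∫_{max(s,t)}^∞ α^3(x) exp(−A^1_x − A^2_x − A^3_x) dx for all s, t ≥ 0; and (ii) μ_sing is concentrated on the diagonal {(x,x) : x ≥ 0} (hence singular with respect to two-dimensional Lebesgue measure whenever it is nonzero) and satisfies μ_sing((s,∞)×(t,∞)) = ∫_{max(s,t)}^∞ α^3(x) exp(−A^1_x − A^2_x − A^3_x) dx for all s, t ≥ 0. -/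

import Mathlib

open MeasureTheory ProbabilityTheory

section Stmt2Aux
open Set Filter
variable {α A : ℝ → ℝ}

lemma myA_sub (hαcont : Continuous α) (hA : ∀ s, A s = ∫ r in (0:ℝ)..s, α r)
    (t s : ℝ) : A s - A t = ∫ r in t..s, α r := by
  rw [hA, hA, ← intervalIntegral.integral_add_adjacent_intervals
    (hαcont.intervalIntegrable 0 t) (hαcont.intervalIntegrable t s)]
  ring

lemma myA_mono' (hαcont : Continuous α) (hαpos : ∀ x, 0 ≤ α x)
    (hA : ∀ s, A s = ∫ r in (0:ℝ)..s, α r) : Monotone A := by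
  intro t s hts
  have := myA_sub hαcont hA t s
  have h2 : 0 ≤ ∫ r in t..s, α r :=
    intervalIntegral.integral_nonneg hts (fun x _ => hαpos x)
  linarith

lemma myA_zero (hA : ∀ s, A s = ∫ r in (0:ℝ)..s, α r) : A 0 = 0 := by simp [hA]

lemma myA_nonneg (hαcont : Continuous α) (hαpos : ∀ x, 0 ≤ α x)
    (hA : ∀ s, A s = ∫ r in (0:ℝ)..s, α r) {s : ℝ} (hs : 0 ≤ s) : 0 ≤ A s := by
  have := myA_mono' hαcont hαpos hA hs
  rwa [myA_zero hA] at this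

lemma myA_deriv (hαcont : Continuous α) (hA : ∀ s, A s = ∫ r in (0:ℝ)..s, α r)
    (x : ℝ) : HasDerivAt A (α x) x := by
  have : HasDerivAt (fun s => ∫ r in (0:ℝ)..s, α r) (α x) x :=
    intervalIntegral.integral_hasDerivAt_right (hαcont.intervalIntegrable 0 x)
      (hαcont.stronglyMeasurableAtFilter _ _) hαcont.continuousAt
  exact this.congr_of_eventuallyEq (by filter_upwards with s using (hA s))

lemma myA_cont (hαcont : Continuous α) (hA : ∀ s, A s = ∫ r in (0:ℝ)..s, α r) :
    Continuous A :=
  continuous_iff_continuousAt.2 fun x => (myA_deriv hαcont hA x).continuousAt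

lemma mySet_nonempty (hAtop : Tendsto A atTop atTop) (z : ℝ) :
    {s : ℝ | 0 ≤ s ∧ z ≤ A s}.Nonempty := by
  obtain ⟨s, hs⟩ := (hAtop.eventually (eventually_ge_atTop z)).and
    (eventually_ge_atTop 0) |>.exists
  exact ⟨s, hs.2, hs.1⟩

lemma mySet_bddBelow (z : ℝ) : BddBelow {s : ℝ | 0 ≤ s ∧ z ≤ A s} :=
  ⟨0, fun _ hs => hs.1⟩

lemma myg_nonneg (hAtop : Tendsto A atTop atTop) (z : ℝ) :
    0 ≤ sInf {s : ℝ | 0 ≤ s ∧ z ≤ A s} :=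
  le_csInf (mySet_nonempty hAtop z) fun _ hs => hs.1

lemma myg_mono (hAtop : Tendsto A atTop atTop) :
    Monotone (fun z => sInf {s : ℝ | 0 ≤ s ∧ z ≤ A s}) := by
  intro z z' hzz'
  exact csInf_le_csInf (mySet_bddBelow z) (mySet_nonempty hAtop z')
    (fun s hs => ⟨hs.1, hzz'.trans hs.2⟩)

lemma myg_lt_iff (hαcont : Continuous α) (hαpos : ∀ x, 0 ≤ α x)
    (hA : ∀ s, A s = ∫ r in (0:ℝ)..s, α r) (hAtop : Tendsto A atTop atTop)
    (z : ℝ) {s : ℝ} (hs : 0 ≤ s) :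
    s < sInf {s' : ℝ | 0 ≤ s' ∧ z ≤ A s'} ↔ A s < z := by
  constructor
  · intro h
    by_contra hc
    push_neg at hc
    exact absurd (csInf_le (mySet_bddBelow z) ⟨hs, hc⟩) (not_le.2 h)
  · intro h
    have hcont := (myA_cont hαcont hA).continuousAt (x := s)
    have : ∀ᶠ s' in nhds s, A s' < z := hcont.eventually_lt_const h
    obtain ⟨δ, hδ, hball⟩ := Metric.eventually_nhds_iff_ball.1 this
    have hlow : ∀ s' ∈ {s' : ℝ | 0 ≤ s' ∧ z ≤ A s'}, s + δ/2 ≤ s' := by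
      intro s' hs'
      by_contra hc
      push_neg at hc
      rcases le_or_gt s' s with h1 | h1
      · have := myA_mono' hαcont hαpos hA h1
        exact absurd hs'.2 (not_le.2 (lt_of_le_of_lt this h))
      · have : s' ∈ Metric.ball s δ := by
          rw [Metric.mem_ball, Real.dist_eq, abs_lt]
          constructor <;> nlinarith
        exact absurd hs'.2 (not_le.2 (hball _ this))
    have := le_csInf (mySet_nonempty hAtop z) hlow
    linarith

lemma myexp_deriv (hαcont : Continuous α) (hA : ∀ s, A s = ∫ r in (0:ℝ)..s, α r)
    (x : ℝ) : HasDerivAt (fun x => -Real.exp (-A x)) (α x * Real.exp (-A x)) x := by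
  have h1 : HasDerivAt (fun x => -A x) (-α x) x := (myA_deriv hαcont hA x).neg
  have h2 : HasDerivAt (fun x => Real.exp (-A x)) (Real.exp (-A x) * (-α x)) x :=
    h1.exp
  have : HasDerivAt (fun x => -Real.exp (-A x)) (-(Real.exp (-A x) * -α x)) x := h2.neg
  convert this using 1
  ring

lemma myexp_tendsto' (hAtop : Tendsto A atTop atTop) :
    Tendsto (fun x => -Real.exp (-A x)) atTop (nhds 0) := by
  have h0 : Tendsto (fun x => -A x) atTop atBot := tendsto_neg_atBot_iff.2 hAtop
  have : Tendsto (fun x => Real.exp (-A x)) atTop (nhds 0) :=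
    Real.tendsto_exp_atBot.comp h0
  simpa using this.neg

lemma mykey_integrable (hαcont : Continuous α) (hαpos : ∀ x, 0 ≤ α x)
    (hA : ∀ s, A s = ∫ r in (0:ℝ)..s, α r) (hAtop : Tendsto A atTop atTop)
    (a : ℝ) : IntegrableOn (fun x => α x * Real.exp (-A x)) (Ioi a) :=
  integrableOn_Ioi_deriv_of_nonneg' (fun x _ => myexp_deriv hαcont hA x)
    (fun x _ => mul_nonneg (hαpos x) (Real.exp_nonneg _)) (myexp_tendsto' hAtop)

lemma mykey_integral (hαcont : Continuous α) (hαpos : ∀ x, 0 ≤ α x)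
    (hA : ∀ s, A s = ∫ r in (0:ℝ)..s, α r) (hAtop : Tendsto A atTop atTop)
    (a : ℝ) : ∫ x in Ioi a, α x * Real.exp (-A x) = Real.exp (-A a) := by
  have := integral_Ioi_of_hasDerivAt_of_nonneg' (a := a)
    (g' := fun x => α x * Real.exp (-A x)) (fun x _ => myexp_deriv hαcont hA x)
    (fun x _ => mul_nonneg (hαpos x) (Real.exp_nonneg _)) (myexp_tendsto' hAtop)
  rw [this]; ring

variable {Ω : Type*} [MeasurableSpace Ω] (P : Measure Ω) [IsProbabilityMeasure P]
  {Z : Ω → ℝ} {η : Ω → ℝ}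

omit [IsProbabilityMeasure P] in
lemma myη_meas (hZmeas : Measurable Z) (hAtop : Tendsto A atTop atTop)
    (hη : ∀ ω, η ω = sInf {s : ℝ | 0 ≤ s ∧ Z ω ≤ A s}) : Measurable η := by
  have : η = (fun z => sInf {s : ℝ | 0 ≤ s ∧ z ≤ A s}) ∘ Z := funext hη
  rw [this]
  exact (myg_mono hAtop).measurable.comp hZmeas

omit [MeasurableSpace Ω] in
lemma myη_nonneg (hAtop : Tendsto A atTop atTop)
    (hη : ∀ ω, η ω = sInf {s : ℝ | 0 ≤ s ∧ Z ω ≤ A s}) (ω : Ω) : 0 ≤ η ω := by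
  rw [hη]; exact myg_nonneg hAtop _

omit [MeasurableSpace Ω] in
lemma myη_set (hαcont : Continuous α) (hαpos : ∀ x, 0 ≤ α x)
    (hA : ∀ s, A s = ∫ r in (0:ℝ)..s, α r) (hAtop : Tendsto A atTop atTop)
    (hη : ∀ ω, η ω = sInf {s : ℝ | 0 ≤ s ∧ Z ω ≤ A s}) {s : ℝ} (hs : 0 ≤ s) :
    {ω | s < η ω} = {ω | A s < Z ω} := by
  ext ω
  rw [Set.mem_setOf_eq, Set.mem_setOf_eq, hη, myg_lt_iff hαcont hαpos hA hAtop _ hs]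

omit [IsProbabilityMeasure P] in
lemma mysurvival (hαcont : Continuous α) (hαpos : ∀ x, 0 ≤ α x)
    (hA : ∀ s, A s = ∫ r in (0:ℝ)..s, α r) (hAtop : Tendsto A atTop atTop)
    (hη : ∀ ω, η ω = sInf {s : ℝ | 0 ≤ s ∧ Z ω ≤ A s})
    (hZexp : ∀ s : ℝ, 0 ≤ s → P {ω | s < Z ω} = ENNReal.ofReal (Real.exp (-s)))
    {s : ℝ} (hs : 0 ≤ s) :
    P {ω | s < η ω} = ENNReal.ofReal (Real.exp (-A s)) := by
  rw [myη_set hαcont hαpos hA hAtop hη hs]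
  exact hZexp _ (myA_nonneg hαcont hαpos hA hs)

lemma mylaw (hZmeas : Measurable Z) (hαcont : Continuous α) (hαpos : ∀ x, 0 ≤ α x)
    (hA : ∀ s, A s = ∫ r in (0:ℝ)..s, α r) (hAtop : Tendsto A atTop atTop)
    (hη : ∀ ω, η ω = sInf {s : ℝ | 0 ≤ s ∧ Z ω ≤ A s})
    (hZexp : ∀ s : ℝ, 0 ≤ s → P {ω | s < Z ω} = ENNReal.ofReal (Real.exp (-s))) :
    Measure.map η P = volume.withDensity
      (fun x => (Ioi (0:ℝ)).indicator (fun x => ENNReal.ofReal (α x * Real.exp (-A x))) x) := by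
  have hmeasη := myη_meas hZmeas hAtop hη
  have hIoi : ∀ a : ℝ, volume.withDensity
      (fun x => (Ioi (0:ℝ)).indicator (fun x => ENNReal.ofReal (α x * Real.exp (-A x))) x)
      (Ioi a) = ENNReal.ofReal (Real.exp (-A (max a 0))) := by
    intro a
    rw [withDensity_apply _ measurableSet_Ioi,
      lintegral_indicator measurableSet_Ioi,
      Measure.restrict_restrict measurableSet_Ioi]
    have hset : Ioi (0:ℝ) ∩ Ioi a = Ioi (max a 0) := by
      rw [Ioi_inter_Ioi, sup_comm]
    rw [hset, ← ofReal_integral_eq_lintegral_ofReal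
      (mykey_integrable hαcont hαpos hA hAtop _)
      (ae_of_all _ fun x => mul_nonneg (hαpos x) (Real.exp_nonneg _)),
      mykey_integral hαcont hαpos hA hAtop]
  have : IsProbabilityMeasure (Measure.map η P) :=
    Measure.isProbabilityMeasure_map hmeasη.aemeasurable
  refine ext_of_generate_finite (range Ioi)
    (BorelSpace.measurable_eq.trans (borel_eq_generateFrom_Ioi ℝ)) isPiSystem_Ioi ?_ ?_
  · rintro s ⟨a, rfl⟩
    rw [Measure.map_apply hmeasη measurableSet_Ioi, hIoi]
    rcases le_or_gt 0 a with ha | ha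
    · rw [max_eq_left ha]
      exact mysurvival P hαcont hαpos hA hAtop hη hZexp ha
    · rw [max_eq_right ha.le, myA_zero hA]
      have : (η ⁻¹' Ioi a) = univ := by
        ext ω; simp only [mem_preimage, mem_Ioi, mem_univ, iff_true]
        exact lt_of_lt_of_le ha (myη_nonneg hAtop hη ω)
      rw [this]
      simp
  · rw [measure_univ]
    rw [withDensity_apply _ MeasurableSet.univ, Measure.restrict_univ,
      lintegral_indicator measurableSet_Ioi,
      ← ofReal_integral_eq_lintegral_ofReal
        (mykey_integrable hαcont hαpos hA hAtop _)
        (ae_of_all _ fun x => mul_nonneg (hαpos x) (Real.exp_nonneg _)),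
      mykey_integral hαcont hαpos hA hAtop, myA_zero hA]
    simp

end Stmt2Aux

open Set Filter in
set_option maxHeartbeats 2000000 in
theorem stmt2
    {Ω : Type*} [MeasurableSpace Ω] (P : Measure Ω) [IsProbabilityMeasure P]
    (Z : Fin 3 → Ω → ℝ) (hZmeas : ∀ i, Measurable (Z i))
    (hZexp : ∀ i, ∀ s : ℝ, 0 ≤ s →
      P {ω | s < Z i ω} = ENNReal.ofReal (Real.exp (-s)))
    (hindep : iIndepFun Z P)
    (α : Fin 3 → ℝ → ℝ)
    (hαcont : ∀ i, Continuous (α i)) (hαpos : ∀ i x, 0 ≤ α i x)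
    (A : Fin 3 → ℝ → ℝ)
    (hA : ∀ i s, A i s = ∫ r in (0 : ℝ)..s, α i r)
    (hAmono : ∀ i, StrictMonoOn (A i) (Set.Ici (0 : ℝ)))
    (hAtop : ∀ i, Filter.Tendsto (A i) Filter.atTop Filter.atTop)
    (η : Fin 3 → Ω → ℝ)
    (hη : ∀ i ω, η i ω = sInf {s : ℝ | 0 ≤ s ∧ Z i ω ≤ A i s})
    (τ₁ τ₂ : Ω → ℝ)
    (hτ₁ : ∀ ω, τ₁ ω = min (η 0 ω) (η 2 ω))
    (hτ₂ : ∀ ω, τ₂ ω = min (η 1 ω) (η 2 ω))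
    (μ : Measure (ℝ × ℝ)) (hμ : μ = Measure.map (fun ω => (τ₁ ω, τ₂ ω)) P) :
    ∃ μac μsing : Measure (ℝ × ℝ),
      μ = μac + μsing ∧
      μac ≪ (volume : Measure (ℝ × ℝ)) ∧
      (∀ s t : ℝ, 0 ≤ s → 0 ≤ t →
        μac (Set.Ioi s ×ˢ Set.Ioi t)
          = ENNReal.ofReal (Real.exp (-(A 0 s) - A 1 t - A 2 (max s t))
              - ∫ x in Set.Ioi (max s t),
                  α 2 x * Real.exp (-(A 0 x) - A 1 x - A 2 x))) ∧
      μsing {p : ℝ × ℝ | p.1 = p.2}ᶜ = 0 ∧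
      (∀ s t : ℝ, 0 ≤ s → 0 ≤ t →
        μsing (Set.Ioi s ×ˢ Set.Ioi t)
          = ENNReal.ofReal (∫ x in Set.Ioi (max s t),
              α 2 x * Real.exp (-(A 0 x) - A 1 x - A 2 x))) := by
  classical
  have hηm : ∀ i, Measurable (η i) := fun i => myη_meas (hZmeas i) (hAtop i) (hη i)
  have hηnn : ∀ i ω, 0 ≤ η i ω := fun i => myη_nonneg (hAtop i) (hη i)
  have hτ₁m : Measurable τ₁ := by
    have : τ₁ = fun ω => min (η 0 ω) (η 2 ω) := funext hτ₁
    rw [this]; exact (hηm 0).min (hηm 2)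
  have hτ₂m : Measurable τ₂ := by
    have : τ₂ = fun ω => min (η 1 ω) (η 2 ω) := funext hτ₂
    rw [this]; exact (hηm 1).min (hηm 2)
  have hpm : Measurable (fun ω => (τ₁ ω, τ₂ ω)) := hτ₁m.prodMk hτ₂m
  -- independence of η's
  have hηindep : iIndepFun η P := by
    have heq : η = fun i => (fun z => sInf {s : ℝ | 0 ≤ s ∧ z ≤ A i s}) ∘ Z i := by
      funext i ω; exact hη i ω
    rw [heq]
    exact hindep.comp _ (fun i => (myg_mono (hAtop i)).measurable)
  -- laws
  set f : Fin 3 → ℝ → ENNReal := fun i x =>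
    (Ioi (0:ℝ)).indicator (fun x => ENNReal.ofReal (α i x * Real.exp (-A i x))) x with hf
  have hlaw : ∀ i, Measure.map (η i) P = volume.withDensity (f i) := fun i =>
    mylaw P (hZmeas i) (hαcont i) (hαpos i) (hA i) (hAtop i) (hη i) (hZexp i)
  have hνac : ∀ i, Measure.map (η i) P ≪ (volume : Measure ℝ) := fun i => by
    rw [hlaw i]; exact withDensity_absolutelyContinuous _ _
  have hsurv : ∀ i, ∀ s : ℝ, 0 ≤ s →
      P (η i ⁻¹' Ioi s) = ENNReal.ofReal (Real.exp (-A i s)) := fun i s hs =>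
    mysurvival P (hαcont i) (hαpos i) (hA i) (hAtop i) (hη i) (hZexp i) hs
  set E : Set Ω := {ω | η 2 ω < η 0 ω ∧ η 2 ω < η 1 ω} with hEdef
  have hEmeas : MeasurableSet E :=
    (measurableSet_lt (hηm 2) (hηm 0)).inter (measurableSet_lt (hηm 2) (hηm 1))

  have hηindep2 := hηindep
  have hcontA : ∀ i, Continuous (A i) := fun i => myA_cont (hαcont i) (hA i)
  have hAnn : ∀ i, ∀ x : ℝ, 0 ≤ x → 0 ≤ A i x := fun i x hx =>
    myA_nonneg (hαcont i) (hαpos i) (hA i) hx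
  have hInt : ∀ m : ℝ, 0 ≤ m →
      IntegrableOn (fun x => α 2 x * Real.exp (-(A 0 x) - A 1 x - A 2 x)) (Ioi m) := by
    intro m hm0
    refine Integrable.mono (mykey_integrable (hαcont 2) (hαpos 2) (hA 2) (hAtop 2) m) ?_ ?_
    · exact ((hαcont 2).mul (Real.continuous_exp.comp
        (((hcontA 0).neg.sub (hcontA 1)).sub (hcontA 2)))).aestronglyMeasurable
    · rw [ae_restrict_iff' measurableSet_Ioi]
      refine ae_of_all _ fun x hx => ?_
      have hx0 : (0:ℝ) ≤ x := hm0.trans (le_of_lt hx)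
      rw [Real.norm_of_nonneg (mul_nonneg (hαpos 2 x) (Real.exp_nonneg _)),
        Real.norm_of_nonneg (mul_nonneg (hαpos 2 x) (Real.exp_nonneg _))]
      refine mul_le_mul_of_nonneg_left ?_ (hαpos 2 x)
      refine Real.exp_le_exp.2 ?_
      have h0 := hAnn 0 x hx0
      have h1 := hAnn 1 x hx0
      linarith
  have hI0 : ∀ m : ℝ, 0 ≤ ∫ x in Ioi m, α 2 x * Real.exp (-(A 0 x) - A 1 x - A 2 x) :=
    fun m => setIntegral_nonneg measurableSet_Ioi
      (fun x _ => mul_nonneg (hαpos 2 x) (Real.exp_nonneg _))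
  have hμval : ∀ s t : ℝ, 0 ≤ s → 0 ≤ t →
      Measure.map (fun ω => (τ₁ ω, τ₂ ω)) P (Ioi s ×ˢ Ioi t)
        = ENNReal.ofReal (Real.exp (-(A 0 s) - A 1 t - A 2 (max s t))) := by
    intro s t hs ht
    rw [Measure.map_apply hpm (measurableSet_Ioi.prod measurableSet_Ioi)]
    have hev : (fun ω => (τ₁ ω, τ₂ ω)) ⁻¹' (Ioi s ×ˢ Ioi t)
        = ((fun ω => (η 0 ω, η 1 ω)) ⁻¹' (Ioi s ×ˢ Ioi t)) ∩ (η 2 ⁻¹' Ioi (max s t)) := by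
      ext ω
      simp only [mem_preimage, mem_prod, mem_Ioi, mem_inter_iff]
      rw [hτ₁ ω, hτ₂ ω, lt_min_iff, lt_min_iff, max_lt_iff]
      tauto
    rw [hev, (hηindep.indepFun_prodMk hηm 0 1 2 (by decide)
        (by decide)).measure_inter_preimage_eq_mul _ _
        (measurableSet_Ioi.prod measurableSet_Ioi) measurableSet_Ioi]
    have hpre : (fun ω => (η 0 ω, η 1 ω)) ⁻¹' (Ioi s ×ˢ Ioi t)
        = (η 0 ⁻¹' Ioi s) ∩ (η 1 ⁻¹' Ioi t) := Set.mk_preimage_prod _ _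
    rw [hpre, (hηindep.indepFun (show (0:Fin 3) ≠ 1 by decide)).measure_inter_preimage_eq_mul
        _ _ measurableSet_Ioi measurableSet_Ioi,
      hsurv 0 s hs, hsurv 1 t ht, hsurv 2 _ (le_max_of_le_left hs),
      ← ENNReal.ofReal_mul (Real.exp_nonneg _),
      ← ENNReal.ofReal_mul (mul_nonneg (Real.exp_nonneg _) (Real.exp_nonneg _))]
    congr 1
    rw [show (-(A 0 s) - A 1 t - A 2 (max s t))
        = (-A 0 s + -A 1 t) + -A 2 (max s t) by ring, Real.exp_add, Real.exp_add]
  have hsingval : ∀ s t : ℝ, 0 ≤ s → 0 ≤ t →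
      Measure.map (fun ω => (τ₁ ω, τ₂ ω)) (P.restrict E) (Ioi s ×ˢ Ioi t)
        = ENNReal.ofReal (∫ x in Ioi (max s t),
            α 2 x * Real.exp (-(A 0 x) - A 1 x - A 2 x)) := by
    intro s t hs ht
    set m := max s t with hm
    have hm0 : 0 ≤ m := le_max_of_le_left hs
    set W : Ω → ℝ := fun ω => min (η 0 ω) (η 1 ω) with hW
    have hWm : Measurable W := (hηm 0).min (hηm 1)
    have hindep2W : IndepFun (η 2) W P := by
      have h0 := (hηindep.indepFun_prodMk hηm 0 1 2 (by decide) (by decide)).symm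
      exact h0.comp measurable_id (measurable_fst.min measurable_snd)
    have hmap2W : Measure.map (fun ω => (η 2 ω, W ω)) P
        = (Measure.map (η 2) P).prod (Measure.map W P) :=
      (indepFun_iff_map_prod_eq_prod_map_map (hηm 2).aemeasurable hWm.aemeasurable).1 hindep2W
    set T : Set (ℝ × ℝ) := {p | m < p.1 ∧ p.1 < p.2} with hT
    have hTmeas : MeasurableSet T := by
      rw [hT, setOf_and]
      exact (measurableSet_lt measurable_const measurable_fst).inter
        (measurableSet_lt measurable_fst measurable_snd)
    have hev : (fun ω => (τ₁ ω, τ₂ ω)) ⁻¹' (Ioi s ×ˢ Ioi t) ∩ E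
        = (fun ω => (η 2 ω, W ω)) ⁻¹' T := by
      ext ω
      simp only [mem_inter_iff, mem_preimage, mem_prod, mem_Ioi, mem_setOf_eq, hEdef, hT, hW]
      rw [hτ₁ ω, hτ₂ ω]
      constructor
      · rintro ⟨⟨h1, h2⟩, h3, h4⟩
        refine ⟨?_, lt_min h3 h4⟩
        rw [hm]
        exact max_lt (lt_of_lt_of_le h1 (min_le_right _ _))
          (lt_of_lt_of_le h2 (min_le_right _ _))
      · rintro ⟨h1, h2⟩
        rw [hm, max_lt_iff] at h1
        rw [lt_min_iff] at h2
        exact ⟨⟨lt_min (h1.1.trans h2.1) h1.1, lt_min (h1.2.trans h2.2) h1.2⟩, h2.1, h2.2⟩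
    rw [Measure.map_apply hpm (measurableSet_Ioi.prod measurableSet_Ioi),
      Measure.restrict_apply (hpm (measurableSet_Ioi.prod measurableSet_Ioi)), hev,
      ← Measure.map_apply ((hηm 2).prodMk hWm) hTmeas, hmap2W,
      Measure.prod_apply hTmeas]
    have hWsurv : ∀ x : ℝ, 0 ≤ x → (Measure.map W P) (Ioi x)
        = ENNReal.ofReal (Real.exp (-A 0 x) * Real.exp (-A 1 x)) := by
      intro x hx
      rw [Measure.map_apply hWm measurableSet_Ioi]
      have hWpre : W ⁻¹' Ioi x = (η 0 ⁻¹' Ioi x) ∩ (η 1 ⁻¹' Ioi x) := by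
        ext ω; simp [hW, lt_min_iff]
      rw [hWpre, (hηindep.indepFun
          (show (0:Fin 3) ≠ 1 by decide)).measure_inter_preimage_eq_mul
          _ _ measurableSet_Ioi measurableSet_Ioi,
        hsurv 0 x hx, hsurv 1 x hx, ← ENNReal.ofReal_mul (Real.exp_nonneg _)]
    have hslice : (fun x => (Measure.map W P) (Prod.mk x ⁻¹' T))
        = (Ioi m).indicator (fun x => (Measure.map W P) (Ioi x)) := by
      funext x
      rcases lt_or_ge m x with h | h
      · rw [indicator_of_mem (mem_Ioi.mpr h)]
        congr 1
        ext y
        simp only [mem_preimage, hT, mem_setOf_eq, mem_Ioi]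
        exact ⟨fun hy => hy.2, fun hy => ⟨h, hy⟩⟩
      · rw [indicator_of_notMem (fun hmem => absurd (mem_Ioi.mp hmem) (not_lt.2 h))]
        have hemp : Prod.mk x ⁻¹' T = ∅ := by
          ext y
          simp only [mem_preimage, hT, mem_setOf_eq, mem_empty_iff_false, iff_false, not_and]
          intro hx
          exact absurd hx (not_lt.2 h)
        rw [hemp]; simp
    rw [hslice, lintegral_indicator measurableSet_Ioi]
    have hWioimeas : Measurable fun x => (Measure.map W P) (Ioi x) := by
      have hant : Antitone fun x => (Measure.map W P) (Ioi x) :=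
        fun x y hxy => measure_mono (Ioi_subset_Ioi hxy)
      exact hant.measurable
    have hfmeas2 : Measurable (f 2) := by
      rw [hf]
      exact Measurable.indicator (ENNReal.measurable_ofReal.comp
        ((hαcont 2).mul (Real.continuous_exp.comp (hcontA 2).neg)).measurable) measurableSet_Ioi
    rw [hlaw 2, restrict_withDensity measurableSet_Ioi,
      lintegral_withDensity_eq_lintegral_mul _ hfmeas2 hWioimeas]
    have hcongr : ∀ x ∈ Ioi m, ((f 2) * fun x => (Measure.map W P) (Ioi x)) x
        = ENNReal.ofReal (α 2 x * Real.exp (-(A 0 x) - A 1 x - A 2 x)) := by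
      intro x hx
      have hx0 : (0:ℝ) < x := lt_of_le_of_lt hm0 hx
      simp only [Pi.mul_apply, hf]
      rw [indicator_of_mem (mem_Ioi.2 hx0), hWsurv x hx0.le,
        ← ENNReal.ofReal_mul (mul_nonneg (hαpos 2 x) (Real.exp_nonneg _))]
      congr 1
      have hexp : Real.exp (-A 2 x) * (Real.exp (-A 0 x) * Real.exp (-A 1 x))
          = Real.exp (-(A 0 x) - A 1 x - A 2 x) := by
        rw [← Real.exp_add, ← Real.exp_add]
        congr 1
        ring
      calc α 2 x * Real.exp (-A 2 x) * (Real.exp (-A 0 x) * Real.exp (-A 1 x))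
          = α 2 x * (Real.exp (-A 2 x) * (Real.exp (-A 0 x) * Real.exp (-A 1 x))) := by ring
        _ = _ := by rw [hexp]
    rw [setLIntegral_congr_fun measurableSet_Ioi hcongr,
      ← ofReal_integral_eq_lintegral_ofReal (hInt m hm0)
        (ae_of_all _ fun x => mul_nonneg (hαpos 2 x) (Real.exp_nonneg _))]
  refine ⟨Measure.map (fun ω => (τ₁ ω, τ₂ ω)) (P.restrict Eᶜ),
    Measure.map (fun ω => (τ₁ ω, τ₂ ω)) (P.restrict E), ?_, ?_, ?_, ?_, ?_⟩
  · rw [hμ, ← Measure.map_add _ _ hpm, Measure.restrict_compl_add_restrict hEmeas]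
  · -- absolute continuity
    have hpair : ∀ i j : Fin 3, i ≠ j → Measure.map (fun ω => (η i ω, η j ω)) P
        = (Measure.map (η i) P).prod (Measure.map (η j) P) := fun i j hij =>
      (indepFun_iff_map_prod_eq_prod_map_map (hηm i).aemeasurable (hηm j).aemeasurable).1
        (hηindep.indepFun hij)
    refine Measure.AbsolutelyContinuous.mk fun N hN hN0 => ?_
    rw [Measure.map_apply hpm hN, Measure.restrict_apply (hpm hN)]
    have hzero : ∀ i j : Fin 3, i ≠ j → P ((fun ω => (η i ω, η j ω)) ⁻¹' N) = 0 := by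
      intro i j hij
      rw [← Measure.map_apply ((hηm i).prodMk (hηm j)) hN, hpair i j hij]
      have hac2 : (Measure.map (η i) P).prod (Measure.map (η j) P)
          ≪ (volume : Measure (ℝ × ℝ)) := by
        rw [Measure.volume_eq_prod]
        exact (hνac i).prod (hνac j)
      exact hac2 hN0
    have hsub : (fun ω => (τ₁ ω, τ₂ ω)) ⁻¹' N ∩ Eᶜ ⊆
        ((fun ω => (η 0 ω, η 1 ω)) ⁻¹' N) ∪ ((fun ω => (η 0 ω, η 2 ω)) ⁻¹' N)
          ∪ ((fun ω => (η 2 ω, η 1 ω)) ⁻¹' N) := by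
      rintro ω ⟨hωN, hωE⟩
      simp only [mem_compl_iff, hEdef, mem_setOf_eq, not_and, not_lt] at hωE
      simp only [mem_preimage, mem_union] at hωN ⊢
      rw [hτ₁ ω, hτ₂ ω] at hωN
      rcases le_or_gt (η 0 ω) (η 2 ω) with h02 | h02
      · rcases le_or_gt (η 1 ω) (η 2 ω) with h12 | h12
        · left; left
          rwa [min_eq_left h02, min_eq_left h12] at hωN
        · left; right
          rwa [min_eq_left h02, min_eq_right h12.le] at hωN
      · have h12 : η 1 ω ≤ η 2 ω := hωE h02
        right
        rwa [min_eq_right h02.le, min_eq_left h12] at hωN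
    refine measure_mono_null hsub ?_
    exact measure_union_null (measure_union_null (hzero 0 1 (by decide))
      (hzero 0 2 (by decide))) (hzero 2 1 (by decide))
  · -- μac formula
    intro s t hs ht
    have h1 := hμval s t hs ht
    have h2 := hsingval s t hs ht
    have hadd : Measure.map (fun ω => (τ₁ ω, τ₂ ω)) (P.restrict Eᶜ) (Ioi s ×ˢ Ioi t)
        + Measure.map (fun ω => (τ₁ ω, τ₂ ω)) (P.restrict E) (Ioi s ×ˢ Ioi t)
        = Measure.map (fun ω => (τ₁ ω, τ₂ ω)) P (Ioi s ×ˢ Ioi t) := by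
      conv_rhs => rw [← Measure.restrict_compl_add_restrict (μ := P) hEmeas]
      rw [Measure.map_add _ _ hpm, Measure.add_apply]
    rw [h2, h1] at hadd
    have hle : ENNReal.ofReal (∫ x in Ioi (max s t),
        α 2 x * Real.exp (-(A 0 x) - A 1 x - A 2 x))
        ≤ ENNReal.ofReal (Real.exp (-(A 0 s) - A 1 t - A 2 (max s t))) := by
      rw [← hadd]
      exact le_add_self
    have hIle : (∫ x in Ioi (max s t), α 2 x * Real.exp (-(A 0 x) - A 1 x - A 2 x))
        ≤ Real.exp (-(A 0 s) - A 1 t - A 2 (max s t)) := by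
      rwa [ENNReal.ofReal_le_ofReal_iff (Real.exp_nonneg _)] at hle
    have := ENNReal.eq_sub_of_add_eq ENNReal.ofReal_ne_top hadd
    rw [this, ← ENNReal.ofReal_sub _ (hI0 (max s t))]
  · -- μsing concentrated on diagonal
    rw [Measure.map_apply hpm]
    · rw [Measure.restrict_apply (hpm (measurableSet_eq_fun measurable_fst measurable_snd).compl)]
      convert measure_empty
      · ext ω
        simp only [mem_inter_iff, mem_preimage, mem_compl_iff, mem_setOf_eq, mem_empty_iff_false,
          iff_false, not_and, hEdef]
        intro hne h1 h2
        exact absurd (by rw [hτ₁ ω, hτ₂ ω, min_eq_right h1.le, min_eq_right h2.le]) hne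
      · infer_instance
    · exact (measurableSet_eq_fun measurable_fst measurable_snd).compl
  · exact hsingval
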